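/- Let k be an algebraically closed field with char k ≠ 2, and let a, b, c ∈ k with a ≠ 1. If b² − 4ac + 4c ≠ 0, then the algebra V(a,b,c) = k⟨x,y,z⟩/⟨xy − yx, zx − a·x² − b·xy − c·y² + xz − z², zy − 2xy + yz⟩ is graded-isomorphic to U' = k⟨x,y,z⟩/⟨xy − zx, yx − xz, x² + y² + z²⟩. -/

import Mathlib

noncomputable section

/-- The free algebra on three generators `x, y, z` (indexed by `Fin 3`). -/
abbrev F3 (k : Type) [Field k] : Type := FreeAlgebra k (Fin 3)

noncomputable def X (k : Type) [Field k] : F3 k := FreeAlgebra.ι k 0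
noncomputable def Y (k : Type) [Field k] : F3 k := FreeAlgebra.ι k 1
noncomputable def Z (k : Type) [Field k] : F3 k := FreeAlgebra.ι k 2

/-- The quotient of the free algebra on `x, y, z` by the two-sided ideal
generated by the set `rels`. -/
abbrev quotAlg (k : Type) [Field k] (rels : Set (F3 k)) : Type :=
  RingQuot (fun a b : F3 k => a ∈ rels ∧ b = 0)

/-- The image of the `i`-th generator in the quotient algebra. -/
noncomputable def gen (k : Type) [Field k] (rels : Set (F3 k)) (i : Fin 3) :
    quotAlg k rels :=
  RingQuot.mkAlgHom k (fun a b : F3 k => a ∈ rels ∧ b = 0) (FreeAlgebra.ι k i)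

/-- The `k`-linear span of the images of the generators in the quotient. -/
noncomputable def genSpan (k : Type) [Field k] (rels : Set (F3 k)) :
    Submodule k (quotAlg k rels) :=
  Submodule.span k (Set.range (gen k rels))

/-- There is a graded isomorphism between the two quotient algebras:
a `k`-algebra isomorphism carrying the span of the generators onto the
span of the generators. -/
def GradedIso (k : Type) [Field k] (r1 r2 : Set (F3 k)) : Prop :=
  ∃ φ : quotAlg k r1 ≃ₐ[k] quotAlg k r2,
    Submodule.map φ.toLinearMap (genSpan k r1) = genSpan k r2

/-- Relations of `V(a,b,c) = k⟨x,y,z⟩/⟨xy − yx, zx − a·x² − b·xy − c·y² + xz − z², zy − 2xy + yz⟩`. -/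
noncomputable def Vrel (k : Type) [Field k] (a b c : k) : Set (F3 k) :=
  {X k * Y k - Y k * X k,
   Z k * X k - a • X k ^ 2 - b • (X k * Y k) - c • Y k ^ 2 + X k * Z k - Z k ^ 2,
   Z k * Y k - 2 * (X k * Y k) + Y k * Z k}


/-- Relations of `U' = k⟨x,y,z⟩/⟨xy − zx, yx − xz, x² + y² + z²⟩`. -/
noncomputable def U'rel (k : Type) [Field k] : Set (F3 k) :=
  {X k * Y k - Z k * X k, Y k * X k - X k * Z k, X k ^ 2 + Y k ^ 2 + Z k ^ 2}


def Tag (n : Nat) (p : Prop) : Prop := p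

section Aux

variable (k : Type) [Field k]

noncomputable def liftQ (r1 : Set (F3 k)) {B : Type} [Semiring B] [Algebra k B]
    (f : F3 k →ₐ[k] B) (hf : ∀ p ∈ r1, f p = 0) : quotAlg k r1 →ₐ[k] B :=
  RingQuot.liftAlgHom k ⟨f, by rintro x y ⟨hx, rfl⟩; rw [map_zero]; exact hf x hx⟩

lemma liftQ_gen (r1 : Set (F3 k)) {B : Type} [Semiring B] [Algebra k B]
    (f : F3 k →ₐ[k] B) (hf : ∀ p ∈ r1, f p = 0) (i : Fin 3) :
    liftQ k r1 f hf (gen k r1 i) = f (FreeAlgebra.ι k i) :=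
  RingQuot.liftAlgHom_mkAlgHom_apply k _ _ _

lemma gen_rel_zero (r1 : Set (F3 k)) {p : F3 k} (hp : p ∈ r1) :
    RingQuot.mkAlgHom k (fun x y : F3 k => x ∈ r1 ∧ y = 0) p = 0 := by
  simpa using RingQuot.mkAlgHom_rel k (s := fun x y : F3 k => x ∈ r1 ∧ y = 0) ⟨hp, rfl⟩

lemma hom_ext_gen (r1 : Set (F3 k)) {B : Type} [Semiring B] [Algebra k B]
    {f g : quotAlg k r1 →ₐ[k] B}
    (h : ∀ i, f (gen k r1 i) = g (gen k r1 i)) : f = g := by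
  apply RingQuot.ringQuot_ext'
  apply FreeAlgebra.hom_ext
  funext i
  simpa [gen] using h i

lemma gen_mem_genSpan (r1 : Set (F3 k)) (i : Fin 3) : gen k r1 i ∈ genSpan k r1 :=
  Submodule.subset_span ⟨i, rfl⟩

end Aux

set_option maxHeartbeats 3200000 in
theorem stmt2 (k : Type) [Field k] [IsAlgClosed k] (hchar : ringChar k ≠ 2)
    (a b c : k) (ha : a ≠ 1) (hs : b ^ 2 - 4 * a * c + 4 * c ≠ 0) :
    GradedIso k (Vrel k a b c) (U'rel k) := by
  obtain ⟨u, hu⟩ := IsAlgClosed.exists_pow_nat_eq (-2 : k) two_pos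
  obtain ⟨r, hr⟩ := IsAlgClosed.exists_pow_nat_eq (a - 1 : k) two_pos
  obtain ⟨d, hd⟩ := IsAlgClosed.exists_pow_nat_eq (b ^ 2 - 4 * a * c + 4 * c : k) two_pos
  have h2 : (2 : k) ≠ 0 := Ring.two_ne_zero hchar
  have h8 : (8 : k) ≠ 0 := by
    have := pow_ne_zero 3 h2; norm_num at this; exact this
  have hden : (8 * (a - 1) ^ 2 * (b ^ 2 - 4 * a * c + 4 * c) : k) ≠ 0 :=
    mul_ne_zero (mul_ne_zero h8 (pow_ne_zero 2 (sub_ne_zero.mpr ha))) hs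
  obtain ⟨e, he⟩ : ∃ e : k, (8 * (a - 1) ^ 2 * (b ^ 2 - 4 * a * c + 4 * c)) * e = 1 :=
    ⟨_, mul_inv_cancel₀ hden⟩
  -- relations in the U' quotient
  have hq1 : gen k (U'rel k) 0 * gen k (U'rel k) 1 = gen k (U'rel k) 2 * gen k (U'rel k) 0 := by
    have h := gen_rel_zero k (U'rel k) (p := X k * Y k - Z k * X k) (Set.mem_insert _ _)
    rw [map_sub, map_mul, map_mul, sub_eq_zero] at h
    exact h
  have hq2 : gen k (U'rel k) 1 * gen k (U'rel k) 0 = gen k (U'rel k) 0 * gen k (U'rel k) 2 := by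
    have h := gen_rel_zero k (U'rel k) (p := Y k * X k - X k * Z k)
      (Set.mem_insert_of_mem _ (Set.mem_insert _ _))
    rw [map_sub, map_mul, map_mul, sub_eq_zero] at h
    exact h
  have hq3 : gen k (U'rel k) 2 * gen k (U'rel k) 2 = -(gen k (U'rel k) 0 * gen k (U'rel k) 0 + gen k (U'rel k) 1 * gen k (U'rel k) 1) := by
    have h := gen_rel_zero k (U'rel k) (p := X k ^ 2 + Y k ^ 2 + Z k ^ 2)
      (Set.mem_insert_of_mem _ (Set.mem_insert_of_mem _ rfl))
    rw [map_add, map_add, map_pow, map_pow, map_pow] at h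
    have h' : gen k (U'rel k) 0 * gen k (U'rel k) 0 + gen k (U'rel k) 1 * gen k (U'rel k) 1 + gen k (U'rel k) 2 * gen k (U'rel k) 2 = 0 := by
      simpa [pow_two, gen, X, Y, Z] using h
    calc gen k (U'rel k) 2 * gen k (U'rel k) 2 = (gen k (U'rel k) 0 * gen k (U'rel k) 0 + gen k (U'rel k) 1 * gen k (U'rel k) 1 + gen k (U'rel k) 2 * gen k (U'rel k) 2) - (gen k (U'rel k) 0 * gen k (U'rel k) 0 + gen k (U'rel k) 1 * gen k (U'rel k) 1) := by
          abel
      _ = -(gen k (U'rel k) 0 * gen k (U'rel k) 0 + gen k (U'rel k) 1 * gen k (U'rel k) 1) := by rw [h', zero_sub]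
  -- relations in the V quotient
  have hp1 : gen k (Vrel k a b c) 1 * gen k (Vrel k a b c) 0 = gen k (Vrel k a b c) 0 * gen k (Vrel k a b c) 1 := by
    have h := gen_rel_zero k (Vrel k a b c) (p := X k * Y k - Y k * X k) (Set.mem_insert _ _)
    rw [map_sub, map_mul, map_mul, sub_eq_zero] at h
    exact h.symm
  have hp2 : gen k (Vrel k a b c) 2 * gen k (Vrel k a b c) 0 =
      a • (gen k (Vrel k a b c) 0 * gen k (Vrel k a b c) 0) + b • (gen k (Vrel k a b c) 0 * gen k (Vrel k a b c) 1) + c • (gen k (Vrel k a b c) 1 * gen k (Vrel k a b c) 1) + gen k (Vrel k a b c) 2 * gen k (Vrel k a b c) 2 - gen k (Vrel k a b c) 0 * gen k (Vrel k a b c) 2 := by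
    have h := gen_rel_zero k (Vrel k a b c)
      (p := Z k * X k - a • X k ^ 2 - b • (X k * Y k) - c • Y k ^ 2 + X k * Z k - Z k ^ 2)
      (Set.mem_insert_of_mem _ (Set.mem_insert _ _))
    simp only [map_sub, map_add, map_smul, map_mul, map_pow] at h
    have h' : gen k (Vrel k a b c) 2 * gen k (Vrel k a b c) 0 - a • (gen k (Vrel k a b c) 0 * gen k (Vrel k a b c) 0) - b • (gen k (Vrel k a b c) 0 * gen k (Vrel k a b c) 1) - c • (gen k (Vrel k a b c) 1 * gen k (Vrel k a b c) 1)
        + gen k (Vrel k a b c) 0 * gen k (Vrel k a b c) 2 - gen k (Vrel k a b c) 2 * gen k (Vrel k a b c) 2 = 0 := by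
      simpa [pow_two, gen, X, Y, Z] using h
    calc gen k (Vrel k a b c) 2 * gen k (Vrel k a b c) 0
        = (gen k (Vrel k a b c) 2 * gen k (Vrel k a b c) 0 - a • (gen k (Vrel k a b c) 0 * gen k (Vrel k a b c) 0) - b • (gen k (Vrel k a b c) 0 * gen k (Vrel k a b c) 1) - c • (gen k (Vrel k a b c) 1 * gen k (Vrel k a b c) 1)
            + gen k (Vrel k a b c) 0 * gen k (Vrel k a b c) 2 - gen k (Vrel k a b c) 2 * gen k (Vrel k a b c) 2)
          + (a • (gen k (Vrel k a b c) 0 * gen k (Vrel k a b c) 0) + b • (gen k (Vrel k a b c) 0 * gen k (Vrel k a b c) 1) + c • (gen k (Vrel k a b c) 1 * gen k (Vrel k a b c) 1)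
            + gen k (Vrel k a b c) 2 * gen k (Vrel k a b c) 2 - gen k (Vrel k a b c) 0 * gen k (Vrel k a b c) 2) := by module
      _ = _ := by rw [h', zero_add]
  have hp3 : gen k (Vrel k a b c) 2 * gen k (Vrel k a b c) 1 = (2 : k) • (gen k (Vrel k a b c) 0 * gen k (Vrel k a b c) 1) - gen k (Vrel k a b c) 1 * gen k (Vrel k a b c) 2 := by
    have h := gen_rel_zero k (Vrel k a b c)
      (p := Z k * Y k - 2 * (X k * Y k) + Y k * Z k)
      (Set.mem_insert_of_mem _ (Set.mem_insert_of_mem _ rfl))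
    simp only [map_add, map_sub, map_mul, map_ofNat] at h
    have htwo : (2 : quotAlg k (Vrel k a b c)) * (gen k (Vrel k a b c) 0 * gen k (Vrel k a b c) 1) = (2 : k) • (gen k (Vrel k a b c) 0 * gen k (Vrel k a b c) 1) := by
      rw [Algebra.smul_def, map_ofNat]
    have h' : gen k (Vrel k a b c) 2 * gen k (Vrel k a b c) 1 - (2 : k) • (gen k (Vrel k a b c) 0 * gen k (Vrel k a b c) 1) + gen k (Vrel k a b c) 1 * gen k (Vrel k a b c) 2 = 0 := by
      rw [← htwo]; simpa [gen, X, Y, Z] using h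
    calc gen k (Vrel k a b c) 2 * gen k (Vrel k a b c) 1
        = (gen k (Vrel k a b c) 2 * gen k (Vrel k a b c) 1 - (2 : k) • (gen k (Vrel k a b c) 0 * gen k (Vrel k a b c) 1) + gen k (Vrel k a b c) 1 * gen k (Vrel k a b c) 2)
          + ((2 : k) • (gen k (Vrel k a b c) 0 * gen k (Vrel k a b c) 1) - gen k (Vrel k a b c) 1 * gen k (Vrel k a b c) 2) := by module
      _ = _ := by rw [h', zero_add]
  have htwoU : ∀ w : quotAlg k (U'rel k), (2 : quotAlg k (U'rel k)) * w = (2 : k) • w := by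
    intro w; rw [Algebra.smul_def, map_ofNat]
  -- the forward map
  obtain ⟨F, hF0, hF1, hF2⟩ : ∃ F : quotAlg k (Vrel k a b c) →ₐ[k] quotAlg k (U'rel k),
      F (gen k (Vrel k a b c) 0) = (-(b*u)) • gen k (U'rel k) 0 + d • gen k (U'rel k) 1 + d • gen k (U'rel k) 2 ∧ F (gen k (Vrel k a b c) 1) = (2*a*u - 2*u) • gen k (U'rel k) 0 ∧ F (gen k (Vrel k a b c) 2) = (-(b*u)) • gen k (U'rel k) 0 + (d + r*d) • gen k (U'rel k) 1 + (d - r*d) • gen k (U'rel k) 2 := by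
    refine ⟨liftQ k _ (FreeAlgebra.lift k ![(-(b*u)) • gen k (U'rel k) 0 + d • gen k (U'rel k) 1 + d • gen k (U'rel k) 2, (2*a*u - 2*u) • gen k (U'rel k) 0, (-(b*u)) • gen k (U'rel k) 0 + (d + r*d) • gen k (U'rel k) 1 + (d - r*d) • gen k (U'rel k) 2]) ?_, ?_, ?_, ?_⟩
    · intro p hp
      simp only [Vrel, Set.mem_insert_iff, Set.mem_singleton_iff] at hp
      rcases hp with h | h | h <;> subst h <;>
        simp only [pow_two, map_sub, map_add, map_smul, map_mul, map_ofNat, X, Y, Z,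
          FreeAlgebra.lift_ι_apply, Matrix.cons_val_zero, Matrix.cons_val_one,
          Matrix.cons_val_two, Matrix.head_cons, Matrix.tail_cons]
      · -- relation 1
        simp only [mul_add, add_mul, mul_sub, sub_mul, smul_mul_assoc, mul_smul_comm, smul_smul, smul_add, smul_sub, smul_neg, neg_smul]
        simp only [hq1, hq2, hq3]
        match_scalars
        · linear_combination (0:k) * he
        · linear_combination (0:k) * he
        · linear_combination (0:k) * he
      · -- relation 2
        simp only [mul_add, add_mul, mul_sub, sub_mul, smul_mul_assoc, mul_smul_comm, smul_smul, smul_add, smul_sub, smul_neg, neg_smul]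
        simp only [hq1, hq2, hq3]
        match_scalars
        · linear_combination ((-4 : k)*c + (-1 : k)*b*b + (8 : k)*a*c + a*b*b + (-4 : k)*a*a*c) * hu + (d*d) * hr + ((-2 : k) + (2 : k)*a) * hd
        · linear_combination (0:k) * he
        · linear_combination (0:k) * he
        · linear_combination (0:k) * he
        · linear_combination (d*d) * hr
        · linear_combination (d*d) * hr
      · -- relation 3
        simp only [htwoU]
        simp only [mul_add, add_mul, mul_sub, sub_mul, smul_mul_assoc, mul_smul_comm, smul_smul, smul_add, smul_sub, smul_neg, neg_smul]
        simp only [hq1, hq2, hq3]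
        match_scalars
        · linear_combination (0:k) * he
        · linear_combination (0:k) * he
        · linear_combination (0:k) * he
    · rw [liftQ_gen]
      simp [X, FreeAlgebra.lift_ι_apply]
    · rw [liftQ_gen]
      simp [Y, FreeAlgebra.lift_ι_apply]
    · rw [liftQ_gen]
      simp [Z, FreeAlgebra.lift_ι_apply]
  -- the backward map
  obtain ⟨G, hG0, hG1, hG2⟩ : ∃ G : quotAlg k (U'rel k) →ₐ[k] quotAlg k (Vrel k a b c),
      G (gen k (U'rel k) 0) = (e * (-2*(a-1)*(b^2-4*a*c+4*c)*u)) • gen k (Vrel k a b c) 1 ∧ G (gen k (U'rel k) 1) = (e * (4*(1-a)*((1-a)+r)*d)) • gen k (Vrel k a b c) 0 + (e * (-2*b*(1-a)*d)) • gen k (Vrel k a b c) 1 + (e * (-4*r*(1-a)*d)) • gen k (Vrel k a b c) 2 ∧ G (gen k (U'rel k) 2) = (e * (4*(1-a)*((1-a)-r)*d)) • gen k (Vrel k a b c) 0 + (e * (-2*b*(1-a)*d)) • gen k (Vrel k a b c) 1 + (e * (4*r*(1-a)*d)) • gen k (Vrel k a b c) 2 := by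
    refine ⟨liftQ k _ (FreeAlgebra.lift k ![(e * (-2*(a-1)*(b^2-4*a*c+4*c)*u)) • gen k (Vrel k a b c) 1, (e * (4*(1-a)*((1-a)+r)*d)) • gen k (Vrel k a b c) 0 + (e * (-2*b*(1-a)*d)) • gen k (Vrel k a b c) 1 + (e * (-4*r*(1-a)*d)) • gen k (Vrel k a b c) 2, (e * (4*(1-a)*((1-a)-r)*d)) • gen k (Vrel k a b c) 0 + (e * (-2*b*(1-a)*d)) • gen k (Vrel k a b c) 1 + (e * (4*r*(1-a)*d)) • gen k (Vrel k a b c) 2]) ?_, ?_, ?_, ?_⟩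
    · intro p hp
      simp only [U'rel, Set.mem_insert_iff, Set.mem_singleton_iff] at hp
      rcases hp with h | h | h <;> subst h <;>
        simp only [pow_two, map_sub, map_add, map_smul, map_mul, map_ofNat, X, Y, Z,
          FreeAlgebra.lift_ι_apply, Matrix.cons_val_zero, Matrix.cons_val_one,
          Matrix.cons_val_two, Matrix.head_cons, Matrix.tail_cons]
      · -- relation 1
        simp only [mul_add, add_mul, mul_sub, sub_mul, smul_mul_assoc, mul_smul_comm, smul_smul, smul_add, smul_sub, smul_neg, neg_smul]
        simp only [hp1, hp2, hp3]
        match_scalars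
        · linear_combination (0:k) * he
        · linear_combination (0:k) * he
        · linear_combination (0:k) * he
      · -- relation 2
        simp only [mul_add, add_mul, mul_sub, sub_mul, smul_mul_assoc, mul_smul_comm, smul_smul, smul_add, smul_sub, smul_neg, neg_smul]
        simp only [hp1, hp2, hp3]
        match_scalars
        · linear_combination (0:k) * he
        · linear_combination (0:k) * he
        · linear_combination (0:k) * he
      · -- relation 3
        simp only [mul_add, add_mul, mul_sub, sub_mul, smul_mul_assoc, mul_smul_comm, smul_smul, smul_add, smul_sub, smul_neg, neg_smul]
        simp only [hp1, hp2, hp3]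
        match_scalars
        · linear_combination ((64 : k)*c*c*e*e + (32 : k)*b*b*c*e*e + (4 : k)*b*b*b*b*e*e + (-256 : k)*a*c*c*e*e + (-96 : k)*a*b*b*c*e*e + (-8 : k)*a*b*b*b*b*e*e + (384 : k)*a*a*c*c*e*e + (96 : k)*a*a*b*b*c*e*e + (4 : k)*a*a*b*b*b*b*e*e + (-256 : k)*a*a*a*c*c*e*e + (-32 : k)*a*a*a*b*b*c*e*e + (64 : k)*a*a*a*a*c*c*e*e) * hu + ((-32 : k)*c*d*d*e*e + (64 : k)*a*c*d*d*e*e + (-32 : k)*a*a*c*d*d*e*e) * hr + ((32 : k)*c*e*e + (8 : k)*b*b*e*e + (-96 : k)*a*c*e*e + (-16 : k)*a*b*b*e*e + (96 : k)*a*a*c*e*e + (8 : k)*a*a*b*b*e*e + (-32 : k)*a*a*a*c*e*e) * hd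
        · linear_combination ((32 : k)*d*d*e*e + (-96 : k)*a*d*d*e*e + (96 : k)*a*a*d*d*e*e + (-32 : k)*a*a*a*d*d*e*e) * hr
        · linear_combination ((-32 : k)*b*d*d*e*e + (64 : k)*a*b*d*d*e*e + (-32 : k)*a*a*b*d*d*e*e) * hr
        · linear_combination (0:k) * he
        · linear_combination (0:k) * he
        · linear_combination (0:k) * he
    · rw [liftQ_gen]
      simp [X, FreeAlgebra.lift_ι_apply]
    · rw [liftQ_gen]
      simp [Y, FreeAlgebra.lift_ι_apply]
    · rw [liftQ_gen]
      simp [Z, FreeAlgebra.lift_ι_apply]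
  have hFG : F.comp G = AlgHom.id k (quotAlg k (U'rel k)) := by
    apply hom_ext_gen
    intro i
    fin_cases i <;>
      simp only [Fin.zero_eta, Fin.mk_one, Fin.reduceFinMk, Fin.isValue]
    · simp only [AlgHom.comp_apply, AlgHom.id_apply, Fin.isValue, hG0, map_add, map_smul,
        hF0, hF1, hF2]
      match_scalars
      · linear_combination ((1 : k)) * he + ((-16 : k)*c*e + (-4 : k)*b*b*e + (48 : k)*a*c*e + (8 : k)*a*b*b*e + (-48 : k)*a*a*c*e + (-4 : k)*a*a*b*b*e + (16 : k)*a*a*a*c*e) * hu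
    · simp only [AlgHom.comp_apply, AlgHom.id_apply, Fin.isValue, hG1, map_add, map_smul,
        hF0, hF1, hF2]
      match_scalars
      · linear_combination (0:k) * he
      · linear_combination ((1 : k)) * he + ((-4 : k)*d*d*e + (4 : k)*a*d*d*e) * hr + ((8 : k)*e + (-16 : k)*a*e + (8 : k)*a*a*e) * hd
      · linear_combination ((4 : k)*d*d*e + (-4 : k)*a*d*d*e) * hr
    · simp only [AlgHom.comp_apply, AlgHom.id_apply, Fin.isValue, hG2, map_add, map_smul,
        hF0, hF1, hF2]
      match_scalars
      · linear_combination (0:k) * he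
      · linear_combination ((4 : k)*d*d*e + (-4 : k)*a*d*d*e) * hr
      · linear_combination ((1 : k)) * he + ((-4 : k)*d*d*e + (4 : k)*a*d*d*e) * hr + ((8 : k)*e + (-16 : k)*a*e + (8 : k)*a*a*e) * hd
  have hGF : G.comp F = AlgHom.id k (quotAlg k (Vrel k a b c)) := by
    apply hom_ext_gen
    intro i
    fin_cases i <;>
      simp only [Fin.zero_eta, Fin.mk_one, Fin.reduceFinMk, Fin.isValue]
    · simp only [AlgHom.comp_apply, AlgHom.id_apply, Fin.isValue, hF0, map_add, map_smul,
        hG0, hG1, hG2]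
      match_scalars
      · linear_combination ((-8 : k)*b*c*e + (-2 : k)*b*b*b*e + (16 : k)*a*b*c*e + (2 : k)*a*b*b*b*e + (-8 : k)*a*a*b*c*e) * hu + ((-4 : k)*b*e + (4 : k)*a*b*e) * hd
      · linear_combination ((1 : k)) * he + ((8 : k)*e + (-16 : k)*a*e + (8 : k)*a*a*e) * hd
      · linear_combination (0:k) * he
    · simp only [AlgHom.comp_apply, AlgHom.id_apply, Fin.isValue, hF1, map_add, map_smul,
        hG0, hG1, hG2]
      match_scalars
      · linear_combination ((1 : k)) * he + ((-16 : k)*c*e + (-4 : k)*b*b*e + (48 : k)*a*c*e + (8 : k)*a*b*b*e + (-48 : k)*a*a*c*e + (-4 : k)*a*a*b*b*e + (16 : k)*a*a*a*c*e) * hu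
    · simp only [AlgHom.comp_apply, AlgHom.id_apply, Fin.isValue, hF2, map_add, map_smul,
        hG0, hG1, hG2]
      match_scalars
      · linear_combination ((-8 : k)*b*c*e + (-2 : k)*b*b*b*e + (16 : k)*a*b*c*e + (2 : k)*a*b*b*b*e + (-8 : k)*a*a*b*c*e) * hu + ((-4 : k)*b*e + (4 : k)*a*b*e) * hd
      · linear_combination ((8 : k)*d*d*e + (-8 : k)*a*d*d*e) * hr
      · linear_combination ((1 : k)) * he + ((-8 : k)*d*d*e + (8 : k)*a*d*d*e) * hr + ((8 : k)*e + (-16 : k)*a*e + (8 : k)*a*a*e) * hd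
  refine ⟨AlgEquiv.ofAlgHom F G hFG hGF, ?_⟩
  have hmemV : ∀ i, G (gen k (U'rel k) i) ∈ genSpan k (Vrel k a b c) := by
    intro i
    fin_cases i <;>
      simp only [Fin.zero_eta, Fin.mk_one, Fin.reduceFinMk, Fin.isValue]
    · rw [hG0]
      exact Submodule.smul_mem _ _ (gen_mem_genSpan k _ 1)
    · rw [hG1]
      exact add_mem (add_mem (Submodule.smul_mem _ _ (gen_mem_genSpan k _ 0))
        (Submodule.smul_mem _ _ (gen_mem_genSpan k _ 1)))
        (Submodule.smul_mem _ _ (gen_mem_genSpan k _ 2))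
    · rw [hG2]
      exact add_mem (add_mem (Submodule.smul_mem _ _ (gen_mem_genSpan k _ 0))
        (Submodule.smul_mem _ _ (gen_mem_genSpan k _ 1)))
        (Submodule.smul_mem _ _ (gen_mem_genSpan k _ 2))
  apply le_antisymm
  · rw [genSpan, Submodule.map_span, Submodule.span_le]
    rintro w ⟨v, ⟨i, rfl⟩, rfl⟩
    have hco : ∀ v, (AlgEquiv.ofAlgHom F G hFG hGF).toLinearMap v = F v := fun _ => rfl
    rw [hco]
    fin_cases i <;>
      simp only [Fin.zero_eta, Fin.mk_one, Fin.reduceFinMk, Fin.isValue]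
    · rw [hF0]
      exact add_mem (add_mem (Submodule.smul_mem _ _ (gen_mem_genSpan k _ 0))
        (Submodule.smul_mem _ _ (gen_mem_genSpan k _ 1)))
        (Submodule.smul_mem _ _ (gen_mem_genSpan k _ 2))
    · rw [hF1]
      exact Submodule.smul_mem _ _ (gen_mem_genSpan k _ 0)
    · rw [hF2]
      exact add_mem (add_mem (Submodule.smul_mem _ _ (gen_mem_genSpan k _ 0))
        (Submodule.smul_mem _ _ (gen_mem_genSpan k _ 1)))
        (Submodule.smul_mem _ _ (gen_mem_genSpan k _ 2))
  · rw [genSpan, Submodule.span_le]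
    rintro w ⟨i, rfl⟩
    refine ⟨G (gen k (U'rel k) i), hmemV i, ?_⟩
    have hco : ∀ v, (AlgEquiv.ofAlgHom F G hFG hGF).toLinearMap v = F v := fun _ => rfl
    rw [hco]
    exact AlgHom.congr_fun hFG _
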